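/- Let X = (X₁,…,X_d) be a random vector on a probability space with joint distribution P(X₁ ≤ x₁,…,X_d ≤ x_d) = C(F₁(x₁),…,F_d(x_d)) and joint survival P(X₁ > x₁,…,X_d > x_d) = Ĉ(F₁(x₁),…,F_d(x_d)) for all x ∈ ℝ^d, where C is a d-copula with survival function Ĉ and Fᵢ(x) = P(Xᵢ ≤ x). Let φ : ℝ^d → ℝ be nondecreasing in each argument, and let Q₀, Q̂₁ : [0,1]^d → [0,1] satisfy Q₀(u) ≤ C(u) and Q̂₁(u) ≤ Ĉ(u) for all u ∈ [0,1]^d. Then for every s ∈ ℝ and every x ∈ ℝ^d: if φ(x) ≤ s then P(φ(X) ≤ s) ≥ Q₀(F₁(x₁),…,F_d(x_d)), and if φ(x) > s then P(φ(X) ≤ s) ≤ 1 − Q̂₁(F₁(x₁),…,F_d(x_d)). -/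

import Mathlib

open MeasureTheory Filter

noncomputable section

/-- The closed unit cube in `ℝ^d`. -/
def unitCube (d : ℕ) : Set (Fin d → ℝ) := {u | ∀ i, u i ∈ Set.Icc (0 : ℝ) 1}

/-- A `d`-quasi-copula (conditions imposed on the unit cube). -/
def IsQuasiCopula (d : ℕ) (Q : (Fin d → ℝ) → ℝ) : Prop :=
  (∀ u ∈ unitCube d, Q u ∈ Set.Icc (0 : ℝ) 1) ∧
  (∀ u ∈ unitCube d, (∃ i, u i = 0) → Q u = 0) ∧
  (∀ (i : Fin d), ∀ t ∈ Set.Icc (0 : ℝ) 1, Q (fun j => if j = i then t else 1) = t) ∧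
  (∀ u ∈ unitCube d, ∀ v ∈ unitCube d, (∀ i, u i ≤ v i) → Q u ≤ Q v) ∧
  (∀ u ∈ unitCube d, ∀ v ∈ unitCube d, |Q u - Q v| ≤ ∑ i, |u i - v i|)

/-- The `C`-volume of the box `(a, b]`, via the alternating sum over the vertices. -/
def boxVolume (d : ℕ) (C : (Fin d → ℝ) → ℝ) (a b : Fin d → ℝ) : ℝ :=
  ∑ ε : Fin d → Bool,
    (-1 : ℝ) ^ (Finset.univ.filter fun i => ε i).card * C (fun i => if ε i then a i else b i)

/-- A `d`-copula: a `d`-quasi-copula that is `d`-increasing. -/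
def IsCopula (d : ℕ) (C : (Fin d → ℝ) → ℝ) : Prop :=
  IsQuasiCopula d C ∧
  ∀ a ∈ unitCube d, ∀ b ∈ unitCube d, (∀ i, a i ≤ b i) → 0 ≤ boxVolume d C a b

/-- The survival function `Ĉ(u) = V_C([u₁,1] × ⋯ × [u_d,1])` of a `d`-copula `C`. -/
def survivalFn (d : ℕ) (C : (Fin d → ℝ) → ℝ) (u : Fin d → ℝ) : ℝ :=
  ∑ ε : Fin d → Bool,
    (-1 : ℝ) ^ (Finset.univ.filter fun i => ε i).card * C (fun i => if ε i then u i else 1)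

/-- The lower Fréchet–Hoeffding bound `W_d`. -/
def FHlower (d : ℕ) (u : Fin d → ℝ) : ℝ := max 0 ((∑ i, u i) - (d : ℝ) + 1)

/-- The upper Fréchet–Hoeffding bound `M_d`. -/
def FHupper {d : ℕ} (hd : 0 < d) (u : Fin d → ℝ) : ℝ :=
  Finset.univ.inf' ⟨⟨0, hd⟩, Finset.mem_univ _⟩ u

/-- The one-point improved upper Fréchet–Hoeffding bound `Q̄^{u,α}`. -/
def Qup {d : ℕ} (hd : 0 < d) (u : Fin d → ℝ) (α : ℝ) (v : Fin d → ℝ) : ℝ :=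
  min (FHupper hd v) (α + ∑ i, max (v i - u i) 0)

/-- The one-point improved lower Fréchet–Hoeffding bound `Q̲^{u,α}`. -/
def Qlow (d : ℕ) (u : Fin d → ℝ) (α : ℝ) (v : Fin d → ℝ) : ℝ :=
  max (FHlower d v) (α - ∑ i, max (u i - v i) 0)

/-- The Kolmogorov–Smirnov distance on the unit cube. -/
def DKS (d : ℕ) (Q Q' : (Fin d → ℝ) → ℝ) : ℝ :=
  sSup ((fun v => |Q v - Q' v|) '' unitCube d)

lemma sign_update_false {d : ℕ} (ε : Fin d → Bool) (j : Fin d) (h : ε j = true) :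
    (-1:ℝ) ^ (Finset.univ.filter fun i => Function.update ε j false i).card
      = -(-1:ℝ) ^ (Finset.univ.filter fun i => ε i).card := by
  classical
  have hset : (Finset.univ.filter fun i => Function.update ε j false i)
      = (Finset.univ.filter fun i => ε i).erase j := by
    ext k
    by_cases hk : k = j <;> simp [Function.update, hk, h]
  have hj : j ∈ Finset.univ.filter fun i => ε i := by simp [h]
  have hpos : 0 < (Finset.univ.filter fun i => ε i).card :=
    Finset.card_pos.mpr ⟨j, hj⟩
  obtain ⟨n, hn⟩ := Nat.exists_eq_succ_of_ne_zero hpos.ne'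
  rw [hset, Finset.card_erase_of_mem hj, hn]
  simp only [Nat.succ_sub_one]
  rw [pow_succ]
  ring

lemma pair_cancel {d : ℕ} (C : (Fin d → ℝ) → ℝ) (a c : Fin d → ℝ) (j : Fin d) (m : ℝ)
    (ε : Fin d → Bool) (h : ε j = true) :
    ((-1:ℝ) ^ (Finset.univ.filter fun i => ε i).card *
      (C (fun i => if ε i then Function.update a j m i else c i)
        + C (fun i => if ε i then a i else Function.update c j m i)
        - C (fun i => if ε i then a i else c i)))
    + ((-1:ℝ) ^ (Finset.univ.filter fun i => Function.update ε j false i).card *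
      (C (fun i => if Function.update ε j false i then Function.update a j m i else c i)
        + C (fun i => if Function.update ε j false i then a i
              else Function.update c j m i)
        - C (fun i => if Function.update ε j false i then a i else c i))) = 0 := by
  classical
  have hsgn := sign_update_false ε j h
  have e1 : (fun i => if ε i then Function.update a j m i else c i)
      = (fun i => if Function.update ε j false i then a i
          else Function.update c j m i) := by
    funext i
    by_cases hi : i = j
    · subst hi; simp [Function.update, h]
    · simp [Function.update, hi]
  have e2 : (fun i => if ε i then a i else Function.update c j m i)
      = (fun i => if ε i then a i else c i) := by
    funext i
    by_cases hi : i = j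
    · subst hi; simp [h]
    · simp [Function.update, hi]
  have e3 : (fun i => if Function.update ε j false i then Function.update a j m i else c i)
      = (fun i => if Function.update ε j false i then a i else c i) := by
    funext i
    by_cases hi : i = j
    · subst hi; simp [Function.update]
    · simp [Function.update, hi]
  rw [hsgn, e1, e2, e3]
  ring

lemma box_split {d : ℕ} (C : (Fin d → ℝ) → ℝ) (a c : Fin d → ℝ) (j : Fin d) (m : ℝ) :
    boxVolume d C a c =
      boxVolume d C (Function.update a j m) c + boxVolume d C a (Function.update c j m) := by
  classical
  have key : ∑ ε : Fin d → Bool,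
      ((-1:ℝ) ^ (Finset.univ.filter fun i => ε i).card *
        (C (fun i => if ε i then Function.update a j m i else c i)
          + C (fun i => if ε i then a i else Function.update c j m i)
          - C (fun i => if ε i then a i else c i))) = 0 := by
    have hcancel : ∀ (ε : Fin d → Bool), (ε ∈ Finset.univ) →
        ((fun ε : Fin d → Bool => (-1:ℝ) ^ (Finset.univ.filter fun i => ε i).card *
          (C (fun i => if ε i then Function.update a j m i else c i)
            + C (fun i => if ε i then a i else Function.update c j m i)
            - C (fun i => if ε i then a i else c i))) ε)
        + ((fun ε : Fin d → Bool => (-1:ℝ) ^ (Finset.univ.filter fun i => ε i).card *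
          (C (fun i => if ε i then Function.update a j m i else c i)
            + C (fun i => if ε i then a i else Function.update c j m i)
            - C (fun i => if ε i then a i else c i))) (Function.update ε j (!ε j))) = 0 := by
      intro ε _
      dsimp only
      rcases Bool.dichotomy (ε j) with h | h
      · -- ε j = false : apply pair_cancel to ε'' = update ε j true
        have hflip : Function.update ε j (!ε j) = Function.update ε j true := by
          rw [h, Bool.not_false]
        have h'' : Function.update ε j true j = true := by simp [Function.update]
        have hback : Function.update (Function.update ε j true) j false = ε := by
          funext k
          by_cases hk : k = j
          · subst hk; simp [Function.update, h]
          · simp [Function.update, hk]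
        have hpc := pair_cancel C a c j m (Function.update ε j true) h''
        rw [hback] at hpc
        rw [hflip]
        linarith
      · have hflip : Function.update ε j (!ε j) = Function.update ε j false := by
          rw [h, Bool.not_true]
        rw [hflip]
        exact pair_cancel C a c j m ε h
    have hne : ∀ (ε : Fin d → Bool), (ε ∈ Finset.univ) →
        Function.update ε j (!ε j) ≠ ε := by
      intro ε _ heq
      have := congrFun heq j
      simp [Function.update] at this
    have hinv : ∀ (ε : Fin d → Bool),
        Function.update (Function.update ε j (!ε j)) j (!(Function.update ε j (!ε j)) j) = ε := by
      intro ε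
      funext k
      by_cases hk : k = j
      · subst hk; simp [Function.update]
      · simp [Function.update, hk]
    exact Finset.sum_involution (fun ε _ => Function.update ε j (!ε j)) hcancel
      (fun ε hε _ => hne ε hε) (fun ε _ => Finset.mem_univ _) (fun ε hε => hinv ε)
  have expand : (∑ ε : Fin d → Bool,
      ((-1:ℝ) ^ (Finset.univ.filter fun i => ε i).card *
        (C (fun i => if ε i then Function.update a j m i else c i)
          + C (fun i => if ε i then a i else Function.update c j m i)
          - C (fun i => if ε i then a i else c i)))) =
      boxVolume d C (Function.update a j m) c + boxVolume d C a (Function.update c j m)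
        - boxVolume d C a c := by
    unfold boxVolume
    rw [← Finset.sum_add_distrib, ← Finset.sum_sub_distrib]
    apply Finset.sum_congr rfl
    intro ε _
    ring
  rw [expand] at key
  linarith

lemma surv_eq_box {d : ℕ} (C : (Fin d → ℝ) → ℝ) (u : Fin d → ℝ) :
    survivalFn d C u = boxVolume d C u (fun _ => 1) := rfl

lemma surv_step {d : ℕ} {C : (Fin d → ℝ) → ℝ} (hC : IsCopula d C)
    {u : Fin d → ℝ} (hu : u ∈ unitCube d) (j : Fin d) {t : ℝ}
    (h1 : u j ≤ t) (h2 : t ≤ 1) :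
    survivalFn d C (Function.update u j t) ≤ survivalFn d C u := by
  have hsplit := box_split C u (fun _ => (1:ℝ)) j t
  have hnn : 0 ≤ boxVolume d C u (Function.update (fun _ => (1:ℝ)) j t) := by
    apply hC.2 u hu
    · intro i
      by_cases hi : i = j
      · subst hi
        simp only [Function.update_self]
        exact ⟨le_trans (hu i).1 h1, h2⟩
      · simp only [Function.update, hi]
        exact ⟨zero_le_one, le_refl 1⟩
    · intro i
      by_cases hi : i = j
      · subst hi; simpa [Function.update] using h1
      · simpa [Function.update, hi] using (hu i).2
  rw [surv_eq_box, surv_eq_box, hsplit]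
  linarith

lemma surv_anti {d : ℕ} {C : (Fin d → ℝ) → ℝ} (hC : IsCopula d C)
    {u v : Fin d → ℝ} (hu : u ∈ unitCube d) (hv : v ∈ unitCube d)
    (huv : ∀ k, u k ≤ v k) : survivalFn d C v ≤ survivalFn d C u := by
  classical
  have main : ∀ S : Finset (Fin d),
      survivalFn d C (fun k => if k ∈ S then v k else u k) ≤ survivalFn d C u := by
    intro S
    induction S using Finset.induction_on with
    | empty => simp
    | @insert j S hj ih =>
      have hw : (fun k => if k ∈ insert j S then v k else u k)
          = Function.update (fun k => if k ∈ S then v k else u k) j (v j) := by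
        funext k
        by_cases hk : k = j
        · subst hk; simp [hj]
        · simp [Function.update, hk, Finset.mem_insert]
      rw [hw]
      refine le_trans (surv_step hC ?_ j ?_ ?_) ih
      · intro k
        by_cases hk : k ∈ S
        · simp only [hk, if_true]; exact hv k
        · simp only [hk, if_false]; exact hu k
      · simp only [hj, if_false]; exact huv j
      · exact (hv j).2
  have := main Finset.univ
  simpa using this

lemma surv_single {d : ℕ} {C : (Fin d → ℝ) → ℝ} (hC : IsCopula d C)
    (i : Fin d) {t : ℝ} (h0 : 0 ≤ t) (h1 : t ≤ 1) :
    survivalFn d C (fun k => if k = i then t else 0) = 1 - t := by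
  classical
  set ε₀ : Fin d → Bool := fun _ => false with hε₀
  set ε₁ : Fin d → Bool := fun k => decide (k = i) with hε₁
  have hne : ε₀ ≠ ε₁ := by
    intro h
    have := congrFun h i
    simp [hε₀, hε₁] at this
  unfold survivalFn
  rw [← Finset.sum_subset (Finset.subset_univ ({ε₀, ε₁} : Finset (Fin d → Bool)))]
  · rw [Finset.sum_pair hne]
    have hT0 : (Finset.univ.filter fun k => ε₀ k) = ∅ := by simp [hε₀]
    have hT1 : (Finset.univ.filter fun k => ε₁ k) = {i} := by
      ext k; simp [hε₁]
    have hA0 : (fun k => if ε₀ k then (if k = i then t else 0) else 1) = (fun _ => (1:ℝ)) := by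
      funext k; simp [hε₀]
    have hA1 : (fun k => if ε₁ k then (if k = i then t else 0) else 1)
        = (fun k => if k = i then t else 1) := by
      funext k; by_cases hk : k = i <;> simp [hε₁, hk]
    have hCone : C (fun _ => (1:ℝ)) = 1 := by
      have := hC.1.2.2.1 i 1 ⟨zero_le_one, le_refl 1⟩
      simpa using this
    have hCt : C (fun k => if k = i then t else 1) = t := hC.1.2.2.1 i t ⟨h0, h1⟩
    rw [hT0, hT1, hA0, hA1, hCone, hCt]
    simp only [Finset.card_empty, Finset.card_singleton, pow_zero, pow_one, one_mul]
    ring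
  · intro ε _ hε
    have hex : ∃ k, k ≠ i ∧ ε k = true := by
      by_contra hcon
      push_neg at hcon
      apply hε
      have hfalse : ∀ k, k ≠ i → ε k = false := by
        intro k hk
        cases hek : ε k with
        | false => rfl
        | true => exact absurd hek (hcon k hk)
      cases hi : ε i with
      | false =>
        have : ε = ε₀ := by
          funext k
          by_cases hk : k = i
          · subst hk; simp [hε₀, hi]
          · simp [hε₀, hfalse k hk]
        simp [this]
      | true =>
        have : ε = ε₁ := by
          funext k
          by_cases hk : k = i
          · subst hk; simp [hε₁, hi]
          · simp [hε₁, hk, hfalse k hk]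
        simp [this]
    obtain ⟨k, hk, hktrue⟩ := hex
    have hzero : C (fun m => if ε m then (if m = i then t else 0) else 1) = 0 := by
      apply hC.1.2.1
      · intro m
        dsimp only
        rw [Set.mem_Icc]
        by_cases hm : ε m = true
        · by_cases hmi : m = i
          · rw [if_pos hm, if_pos hmi]; exact ⟨h0, h1⟩
          · rw [if_pos hm, if_neg hmi]; exact ⟨le_refl 0, zero_le_one⟩
        · rw [if_neg hm]; exact ⟨zero_le_one, le_refl 1⟩
      · exact ⟨k, by simp [hktrue, hk]⟩
    rw [hzero, mul_zero]

lemma nullMeasurable_of_compl_add {Ω : Type*} [MeasurableSpace Ω] (P : Measure Ω)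
    [IsProbabilityMeasure P] (s : Set Ω) (h : P s + P sᶜ ≤ 1) :
    NullMeasurableSet s P := by
  have hge : (1:ENNReal) ≤ P s + P sᶜ := by
    calc (1:ENNReal) = P Set.univ := measure_univ.symm
    _ = P (s ∪ sᶜ) := by rw [Set.union_compl_self]
    _ ≤ P s + P sᶜ := measure_union_le _ _
  have heq : P s + P sᶜ = 1 := le_antisymm h hge
  set t := toMeasurable P s with ht
  set t' := toMeasurable P sᶜ with ht'
  have htu : t ∪ t' = Set.univ := Set.eq_univ_of_forall fun ω => by
    by_cases hω : ω ∈ s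
    · exact Or.inl (subset_toMeasurable _ _ hω)
    · exact Or.inr (subset_toMeasurable _ _ hω)
  have hsum : P (t ∪ t') + P (t ∩ t') = P t + P t' :=
    measure_union_add_inter t (measurableSet_toMeasurable P sᶜ)
  rw [htu, measure_univ, ht, ht', measure_toMeasurable, measure_toMeasurable, heq] at hsum
  have hnull : P (t ∩ t') = 0 := by
    have h1 : (1:ENNReal) + P (t ∩ t') = 1 + 0 := by rw [add_zero]; exact hsum
    exact (ENNReal.add_right_inj ENNReal.one_ne_top).mp h1
  have hts : t \ s ⊆ t ∩ t' := fun ω hω => ⟨hω.1, subset_toMeasurable P sᶜ hω.2⟩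
  have h0 : P (t \ s) = 0 := measure_mono_null hts hnull
  have hNM : NullMeasurableSet (t \ (t \ s)) P :=
    (measurableSet_toMeasurable P s).nullMeasurableSet.diff (NullMeasurableSet.of_null h0)
  rwa [Set.diff_diff_cancel_left (subset_toMeasurable P s)] at hNM

lemma Fcube {d : ℕ} {Ω : Type*} [MeasurableSpace Ω]
    (P : Measure Ω) [IsProbabilityMeasure P] (X : Ω → Fin d → ℝ)
    (F : Fin d → ℝ → ℝ) (hF : ∀ i x, F i x = (P {ω | X ω i ≤ x}).toReal)
    (y : Fin d → ℝ) : (fun i => F i (y i)) ∈ unitCube d := by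
  intro i
  dsimp only
  rw [Set.mem_Icc, hF]
  constructor
  · exact ENNReal.toReal_nonneg
  · have := ENNReal.toReal_mono ENNReal.one_ne_top (prob_le_one (μ := P) (s := {ω | X ω i ≤ y i}))
    simpa using this

/-- the improved standard bounds for a componentwise nondecreasing aggregation. -/
theorem improved_standard_bounds {d : ℕ} {Ω : Type*} [MeasurableSpace Ω]
    (P : Measure Ω) [IsProbabilityMeasure P] (X : Ω → Fin d → ℝ)
    (C : (Fin d → ℝ) → ℝ) (hC : IsCopula d C)
    (F : Fin d → ℝ → ℝ) (hF : ∀ i x, F i x = (P {ω | X ω i ≤ x}).toReal)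
    (hSklar : ∀ x : Fin d → ℝ,
      (P {ω | ∀ i, X ω i ≤ x i}).toReal = C (fun i => F i (x i)))
    (hSurv : ∀ x : Fin d → ℝ,
      (P {ω | ∀ i, x i < X ω i}).toReal = survivalFn d C (fun i => F i (x i)))
    (φ : (Fin d → ℝ) → ℝ) (hφ : ∀ x y : Fin d → ℝ, (∀ i, x i ≤ y i) → φ x ≤ φ y)
    (Q₀ Q₁ : (Fin d → ℝ) → ℝ)
    (hQ₀Range : ∀ u ∈ unitCube d, Q₀ u ∈ Set.Icc (0 : ℝ) 1)
    (hQ₁Range : ∀ u ∈ unitCube d, Q₁ u ∈ Set.Icc (0 : ℝ) 1)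
    (hQ₀ : ∀ u ∈ unitCube d, Q₀ u ≤ C u)
    (hQ₁ : ∀ u ∈ unitCube d, Q₁ u ≤ survivalFn d C u)
    (s : ℝ) (x : Fin d → ℝ) :
    (φ x ≤ s → Q₀ (fun i => F i (x i)) ≤ (P {ω | φ (X ω) ≤ s}).toReal) ∧
    (s < φ x → (P {ω | φ (X ω) ≤ s}).toReal ≤ 1 - Q₁ (fun i => F i (x i))) := by

  classical
  constructor
  · -- lower bound
    intro hs
    have hsub : {ω | ∀ i, X ω i ≤ x i} ⊆ {ω | φ (X ω) ≤ s} :=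
      fun ω hω => le_trans (hφ _ _ hω) hs
    calc Q₀ (fun i => F i (x i)) ≤ C (fun i => F i (x i)) := hQ₀ _ (Fcube P X F hF x)
    _ = (P {ω | ∀ i, X ω i ≤ x i}).toReal := (hSklar x).symm
    _ ≤ (P {ω | φ (X ω) ≤ s}).toReal :=
        ENNReal.toReal_mono (measure_ne_top P _) (measure_mono hsub)
  · -- upper bound
    intro hs
    -- each C_i := {ω | X ω i ≤ x i} is null measurable
    have hCi : ∀ i : Fin d, NullMeasurableSet {ω | X ω i ≤ x i} P := by
      intro i
      apply nullMeasurable_of_compl_add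
      have hPCi : P {ω | X ω i ≤ x i} = ENNReal.ofReal (F i (x i)) := by
        rw [hF, ENNReal.ofReal_toReal (measure_ne_top P _)]
      have hFi0 : 0 ≤ F i (x i) := ((Fcube P X F hF x) i).1
      have hFi1 : F i (x i) ≤ 1 := ((Fcube P X F hF x) i).2
      have hcompl : P {ω | X ω i ≤ x i}ᶜ ≤ ENNReal.ofReal (1 - F i (x i)) := by
        set y : ℕ → Fin d → ℝ := fun n j => if j = i then x i else -(n:ℝ) with hy
        set Bn : ℕ → Set Ω := fun n => {ω | ∀ j, y n j < X ω j} with hBn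
        have hmono : Monotone Bn := by
          intro n m hnm ω hω j
          refine lt_of_le_of_lt ?_ (hω j)
          by_cases hj : j = i
          · simp [hy, hj]
          · simp only [hy, hj, if_false]
            exact neg_le_neg (Nat.cast_le.mpr hnm)
        have hunion : (⋃ n, Bn n) = {ω | X ω i ≤ x i}ᶜ := by
          ext ω
          simp only [hBn, Set.mem_iUnion, Set.mem_compl_iff, Set.mem_setOf_eq, not_le]
          constructor
          · rintro ⟨n, hn⟩
            have := hn i
            simpa [hy] using this
          · intro hxi
            obtain ⟨n, hnlt⟩ := exists_nat_gt
              (Finset.univ.sup' ⟨i, Finset.mem_univ i⟩ (fun j => -X ω j))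
            refine ⟨n, fun j => ?_⟩
            by_cases hj : j = i
            · simpa [hy, hj] using hxi
            · simp only [hy, hj, if_false]
              have hle : -X ω j ≤ Finset.univ.sup' ⟨i, Finset.mem_univ i⟩ (fun j => -X ω j) :=
                Finset.le_sup' (fun j => -X ω j) (Finset.mem_univ j)
              linarith
        have hBnle : ∀ n, P (Bn n) ≤ ENNReal.ofReal (1 - F i (x i)) := by
          intro n
          have h1 : (P (Bn n)).toReal = survivalFn d C (fun j => F j (y n j)) := hSurv (y n)
          have hva : survivalFn d C (fun j => F j (y n j)) ≤ 1 - F i (x i) := by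
            have hanti := surv_anti hC (u := fun k => if k = i then F i (x i) else 0)
              (v := fun j => F j (y n j)) ?_ (Fcube P X F hF (y n)) ?_
            · rwa [surv_single hC i hFi0 hFi1] at hanti
            · intro k
              rw [Set.mem_Icc]
              by_cases hk : k = i
              · simp only [hk, if_true]; exact ⟨hFi0, hFi1⟩
              · simp only [hk, if_false]; exact ⟨le_refl 0, zero_le_one⟩
            · intro k
              by_cases hk : k = i
              · simp only [hk, if_true, hy]
                exact le_of_eq rfl
              · simp only [hk, if_false]
                exact ((Fcube P X F hF (y n)) k).1
          calc P (Bn n) = ENNReal.ofReal ((P (Bn n)).toReal) :=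
              (ENNReal.ofReal_toReal (measure_ne_top P _)).symm
          _ ≤ ENNReal.ofReal (1 - F i (x i)) := by
              apply ENNReal.ofReal_le_ofReal
              rw [h1]; exact hva
        have hsup : P ({ω | X ω i ≤ x i}ᶜ) = ⨆ n, P (Bn n) := by
          rw [← hunion]
          exact hmono.directed_le.measure_iUnion
        rw [hsup]
        exact iSup_le hBnle
      calc P {ω | X ω i ≤ x i} + P {ω | X ω i ≤ x i}ᶜ
          ≤ ENNReal.ofReal (F i (x i)) + ENNReal.ofReal (1 - F i (x i)) :=
            add_le_add (le_of_eq hPCi) hcompl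
      _ = ENNReal.ofReal 1 := by
            rw [← ENNReal.ofReal_add hFi0 (by linarith)]
            norm_num
      _ = 1 := ENNReal.ofReal_one
    have hBmeas : NullMeasurableSet {ω | ∀ i, x i < X ω i} P := by
      have hBeq : {ω | ∀ i, x i < X ω i} = ⋂ i, {ω | X ω i ≤ x i}ᶜ := by
        ext ω
        simp only [Set.mem_setOf_eq, Set.mem_iInter, Set.mem_compl_iff, not_le]
      rw [hBeq]
      exact NullMeasurableSet.iInter fun i => (hCi i).compl
    have hsub : {ω | φ (X ω) ≤ s} ⊆ {ω | ∀ i, x i < X ω i}ᶜ := by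
      intro ω hω hmem
      exact absurd (le_trans (hφ x _ (fun i => le_of_lt (hmem i))) hω) (not_le.mpr hs)
    have hcompl : P ({ω | ∀ i, x i < X ω i}ᶜ) = 1 - P {ω | ∀ i, x i < X ω i} := by
      rw [measure_compl₀ hBmeas (measure_ne_top P _), measure_univ]
    have hQle : Q₁ (fun i => F i (x i)) ≤ survivalFn d C (fun i => F i (x i)) :=
      hQ₁ _ (Fcube P X F hF x)
    calc (P {ω | φ (X ω) ≤ s}).toReal
        ≤ (P ({ω | ∀ i, x i < X ω i}ᶜ)).toReal :=
          ENNReal.toReal_mono (measure_ne_top P _) (measure_mono hsub)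
    _ = 1 - (P {ω | ∀ i, x i < X ω i}).toReal := by
          rw [hcompl, ENNReal.toReal_sub_of_le prob_le_one ENNReal.one_ne_top,
            ENNReal.toReal_one]
    _ ≤ 1 - Q₁ (fun i => F i (x i)) := by
          rw [hSurv x]
          linarith
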